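/- The nondeterministic state complexity of any block language L ⊆ Σ^ℓ over an alphabet of size k is Θ(√(k^ℓ)); more precisely nsc(L) ≤ 2·(k^(⌈ℓ/2⌉+1)−1)/(k−1), and the palindrome language L_{k,ℓ/2} (for even ℓ) requires at least k^(ℓ/2) states in any NFA accepting it. -/

import Mathlib

/-- Nondeterministic state complexity: the minimal number of states of an NFA accepting `L`. -/
noncomputable def nsc {α : Type} (L : Language α) : ℕ :=
  sInf {n | ∃ M : NFA α (Fin n), M.accepts = L}

/-- The block language of palindromes of length `2 * d`. -/
def palLang (α : Type*) (d : ℕ) : Set (List α) :=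
  {u | ∃ w : List α, w.length = d ∧ u = w ++ w.reverse}


namespace Stmt7Aux

variable {α σ : Type}

lemma evalFrom_append (M : NFA α σ) (S : Set σ) (x y : List α) :
    M.evalFrom S (x ++ y) = M.evalFrom (M.evalFrom S x) y := by
  simp [NFA.evalFrom, List.foldl_append]

lemma mem_evalFrom_iff (M : NFA α σ) (S : Set σ) (x : List α) (q : σ) :
    q ∈ M.evalFrom S x ↔ ∃ s ∈ S, q ∈ M.evalFrom {s} x := by
  induction x generalizing S with
  | nil => simp
  | cons a x ih =>
    have h1 : ∀ T : Set σ, M.evalFrom T (a :: x) = M.evalFrom (M.stepSet T a) x := fun _ => rfl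
    rw [h1, ih]
    constructor
    · rintro ⟨s, hs, hq⟩
      rw [M.mem_stepSet] at hs
      obtain ⟨t, ht, hst⟩ := hs
      refine ⟨t, ht, ?_⟩
      rw [h1, ih]
      exact ⟨s, by rw [M.mem_stepSet]; exact ⟨t, rfl, hst⟩, hq⟩
    · rintro ⟨t, ht, hq⟩
      rw [h1, ih] at hq
      obtain ⟨s, hs, hq⟩ := hq
      rw [M.mem_stepSet] at hs
      obtain ⟨t', ht', hst⟩ := hs
      rw [Set.mem_singleton_iff] at ht'
      subst ht'
      exact ⟨s, by rw [M.mem_stepSet]; exact ⟨t', ht, hst⟩, hq⟩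

lemma mem_evalFrom_cons (M : NFA α σ) (S : Set σ) (a : α) (x : List α) (q : σ) :
    q ∈ M.evalFrom S (a :: x) ↔ ∃ s ∈ S, ∃ t ∈ M.step s a, q ∈ M.evalFrom {t} x := by
  have h1 : M.evalFrom S (a :: x) = M.evalFrom (M.stepSet S a) x := rfl
  rw [h1, mem_evalFrom_iff]
  simp only [NFA.mem_stepSet]
  tauto

end Stmt7Aux

namespace Stmt7Aux

lemma nsc_accepts_le_card {α σ : Type} [Fintype σ] (M : NFA α σ) :
    nsc M.accepts ≤ Fintype.card σ := by
  set n := Fintype.card σ with hn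
  let e : σ ≃ Fin n := Fintype.equivFin σ
  let M' : NFA α (Fin n) :=
    ⟨fun q a => e '' M.step (e.symm q) a, e '' M.start, e '' M.accept⟩
  have hstep : ∀ (S : Set σ) (a : α), M'.stepSet (e '' S) a = e '' M.stepSet S a := by
    intro S a
    ext t
    simp only [NFA.mem_stepSet, Set.mem_image]
    constructor
    · rintro ⟨t', ⟨s, hs, rfl⟩, ht⟩
      obtain ⟨p, hp, rfl⟩ := ht
      refine ⟨p, ⟨s, hs, ?_⟩, rfl⟩
      simpa using hp
    · rintro ⟨p, ⟨s, hs, hp⟩, rfl⟩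
      exact ⟨e s, ⟨s, hs, rfl⟩, ⟨p, by simpa using hp, rfl⟩⟩
  have heval : ∀ (x : List α) (S : Set σ), M'.evalFrom (e '' S) x = e '' M.evalFrom S x := by
    intro x
    induction x with
    | nil => simp [NFA.evalFrom]
    | cons a x ih =>
      intro S
      have h1 : ∀ (T : Set (Fin n)), M'.evalFrom T (a :: x) = M'.evalFrom (M'.stepSet T a) x :=
        fun _ => rfl
      have h2 : M.evalFrom S (a :: x) = M.evalFrom (M.stepSet S a) x := rfl
      rw [h1, h2, hstep, ih]
  have hacc : M'.accepts = M.accepts := by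
    ext x
    rw [NFA.mem_accepts, NFA.mem_accepts]
    show (∃ q ∈ e '' M.accept, q ∈ M'.evalFrom (e '' M.start) x) ↔ _
    rw [heval]
    constructor
    · rintro ⟨q, ⟨p, hp, rfl⟩, hq⟩
      obtain ⟨p', hp', hpq⟩ := hq
      refine ⟨p, hp, ?_⟩
      rwa [e.injective hpq] at hp'
    · rintro ⟨p, hp, hpe⟩
      exact ⟨e p, ⟨p, hp, rfl⟩, ⟨p, hpe, rfl⟩⟩
  exact Nat.sInf_le ⟨M', hacc⟩

end Stmt7Aux

namespace Stmt7Aux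

def ListLe (α : Type) (m : ℕ) : Type := {l : List α // l.length ≤ m}

def listLeEquiv (α : Type) (m : ℕ) : (Σ i : Fin (m + 1), List.Vector α i) ≃ ListLe α m where
  toFun s := ⟨s.2.val, by rw [s.2.2]; exact Nat.lt_succ_iff.mp s.1.isLt⟩
  invFun l := ⟨⟨l.val.length, Nat.lt_succ_of_le l.2⟩, ⟨l.val, rfl⟩⟩
  left_inv s := by
    refine Sigma.subtype_ext (Fin.ext ?_) rfl
    exact s.2.2
  right_inv l := rfl

noncomputable instance (α : Type) [Fintype α] (m : ℕ) : Fintype (ListLe α m) :=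
  Fintype.ofEquiv _ (listLeEquiv α m)

lemma card_ListLe (α : Type) [Fintype α] (m : ℕ) :
    Fintype.card (ListLe α m) = ∑ i ∈ Finset.range (m + 1), Fintype.card α ^ i := by
  rw [← Fintype.card_congr (listLeEquiv α m), Fintype.card_sigma]
  rw [Fin.sum_univ_eq_sum_range (fun i => Fintype.card (List.Vector α i))]
  exact Finset.sum_congr rfl fun i _ => card_vector i

end Stmt7Aux

namespace Stmt7Aux

lemma lower_bound {α σ : Type} [Fintype α] [Fintype σ] (d : ℕ) (M : NFA α σ)
    (hM : M.accepts = palLang α d) :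
    Fintype.card α ^ d ≤ Fintype.card σ := by
  classical
  have key : ∀ f : Fin d → α, ∃ s : σ, s ∈ M.evalFrom M.start (List.ofFn f) ∧
      ∃ q ∈ M.accept, q ∈ M.evalFrom {s} (List.ofFn f).reverse := by
    intro f
    have hx : (List.ofFn f) ++ (List.ofFn f).reverse ∈ M.accepts := by
      rw [hM]; exact ⟨List.ofFn f, by simp, rfl⟩
    rw [NFA.mem_accepts, evalFrom_append] at hx
    obtain ⟨q, hq, hqe⟩ := hx
    rw [mem_evalFrom_iff] at hqe
    obtain ⟨s, hs, hqs⟩ := hqe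
    exact ⟨s, hs, q, hq, hqs⟩
  choose g hg1 hg2 using key
  have hinj : Function.Injective g := by
    intro f f' hff
    have h1 := hg1 f
    obtain ⟨q, hq, hqs⟩ := hg2 f'
    rw [← hff] at hqs
    have hacc : (List.ofFn f) ++ (List.ofFn f').reverse ∈ M.accepts := by
      rw [NFA.mem_accepts, evalFrom_append]
      refine ⟨q, hq, ?_⟩
      rw [mem_evalFrom_iff]
      exact ⟨g f, h1, hqs⟩
    rw [hM] at hacc
    obtain ⟨v, hv, heq⟩ := hacc
    have hlen : (List.ofFn f).length = v.length := by simp [hv]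
    have h2 := List.append_inj heq hlen
    have hf : List.ofFn f = v := h2.1
    have hf' : List.ofFn f' = v := by
      have := h2.2
      have := List.reverse_injective this
      exact this
    rw [← hf'] at hf
    exact List.ofFn_injective hf
  calc Fintype.card α ^ d = Fintype.card (Fin d → α) := by simp
    _ ≤ Fintype.card σ := Fintype.card_le_of_injective g hinj

end Stmt7Aux
namespace Stmt7Aux

variable {α : Type}

def nilSt (α : Type) (m : ℕ) : ListLe α m := ⟨[], Nat.zero_le m⟩

def blockNFA (L : Language α) (m : ℕ) : NFA α (Bool × ListLe α m) where
  step s a :=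
    if s.1 then {t | t.1 = true ∧ s.2.val = a :: t.2.val}
    else {t | (t.1 = false ∧ t.2.val = s.2.val ++ [a]) ∨
              (t.1 = true ∧ s.2.val ++ a :: t.2.val ∈ L)}
  start := {(false, nilSt α m)}
  accept := {(true, nilSt α m)}

lemma start_eq (L : Language α) (m : ℕ) :
    (blockNFA L m).start = {(false, nilSt α m)} := rfl

lemma accept_eq (L : Language α) (m : ℕ) :
    (blockNFA L m).accept = {(true, nilSt α m)} := rfl

lemma step_true (L : Language α) (m : ℕ) (u : ListLe α m) (a : α) :
    (blockNFA L m).step (true, u) a = {t | t.1 = true ∧ u.val = a :: t.2.val} := by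
  simp [blockNFA]

lemma step_false (L : Language α) (m : ℕ) (p : ListLe α m) (a : α) :
    (blockNFA L m).step (false, p) a =
      {t | (t.1 = false ∧ t.2.val = p.val ++ [a]) ∨
           (t.1 = true ∧ p.val ++ a :: t.2.val ∈ L)} := by
  simp [blockNFA]

lemma lemB (L : Language α) (m : ℕ) : ∀ (x : List α) (u : ListLe α m) (s : Bool × ListLe α m),
    s ∈ (blockNFA L m).evalFrom {(true, u)} x ↔
      ∃ w : ListLe α m, s = (true, w) ∧ u.val = x ++ w.val := by
  intro x
  induction x with
  | nil =>
    intro u s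
    simp only [NFA.evalFrom_nil, Set.mem_singleton_iff, List.nil_append]
    constructor
    · rintro rfl; exact ⟨u, rfl, rfl⟩
    · rintro ⟨w, rfl, hw⟩
      have : u = w := Subtype.ext hw
      rw [this]
  | cons a x ih =>
    intro u s
    rw [mem_evalFrom_cons]
    constructor
    · rintro ⟨s', hs', t, ht, hst⟩
      rw [Set.mem_singleton_iff] at hs'
      subst hs'
      rw [step_true] at ht
      obtain ⟨ht1, ht2⟩ := ht
      obtain ⟨tb, tv⟩ := t
      simp only at ht1 ht2
      subst ht1
      rw [ih] at hst
      obtain ⟨w, rfl, hw⟩ := hst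
      exact ⟨w, rfl, by rw [ht2, hw]; simp⟩
    · rintro ⟨w, rfl, hw⟩
      have hlen : (x ++ w.val).length ≤ m := by
        have h2 := u.2
        rw [hw] at h2
        simp only [List.length_cons, List.length_append] at h2 ⊢
        omega
      refine ⟨(true, u), rfl, @Prod.mk Bool (ListLe α m) true ⟨x ++ w.val, hlen⟩, ?_, ?_⟩
      · rw [step_true]; exact ⟨rfl, by simpa using hw⟩
      · erw [ih]; exact ⟨w, rfl, rfl⟩

lemma lemF (L : Language α) (m : ℕ) : ∀ (x : List α) (p₀ : ListLe α m) (w : ListLe α m),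
    (true, w) ∈ (blockNFA L m).evalFrom {(false, p₀)} x →
      ∃ (y : List α) (a : α) (z : List α) (u : ListLe α m),
        x = y ++ a :: z ∧ p₀.val ++ y ++ a :: u.val ∈ L ∧ u.val = z ++ w.val := by
  intro x
  induction x with
  | nil =>
    intro p₀ w h
    simp only [NFA.evalFrom_nil, Set.mem_singleton_iff, Prod.mk.injEq] at h
    exact absurd h.1 (by simp)
  | cons a x ih =>
    intro p₀ w h
    rw [mem_evalFrom_cons] at h
    obtain ⟨s', hs', t, ht, hst⟩ := h
    rw [Set.mem_singleton_iff] at hs'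
    subst hs'
    rw [step_false] at ht
    obtain ⟨tb, tv⟩ := t
    rcases ht with ⟨ht1, ht2⟩ | ⟨ht1, ht2⟩
    · simp only at ht1 ht2
      subst ht1
      obtain ⟨y, a', z, u, hx, hL, hu⟩ := ih tv w hst
      refine ⟨a :: y, a', z, u, by rw [hx]; simp, ?_, hu⟩
      have : p₀.val ++ (a :: y) ++ a' :: u.val = tv.val ++ y ++ a' :: u.val := by
        rw [ht2]; simp
      rw [this]; exact hL
    · simp only at ht1 ht2
      subst ht1
      rw [lemB] at hst
      obtain ⟨w', hw', hu⟩ := hst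
      have : w' = w := by
        have := congrArg Prod.snd hw'
        exact (Subtype.ext (congrArg (fun p => p.val) this)).symm
      subst this
      exact ⟨[], a, x, tv, by simp, by simpa using ht2, hu⟩

lemma reach_false (L : Language α) (m : ℕ) :
    ∀ (y : List α) (p : ListLe α m) (h : p.val.length + y.length ≤ m),
      @Prod.mk Bool (ListLe α m) false ⟨p.val ++ y, by simpa using h⟩ ∈
        (blockNFA L m).evalFrom {(false, p)} y := by
  intro y
  induction y with
  | nil =>
    intro p h
    simp only [NFA.evalFrom_nil, Set.mem_singleton_iff, Prod.mk.injEq]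
    exact congrArg (Prod.mk false) (@Subtype.ext _ _ ⟨p.val ++ [], by simpa using h⟩ p (List.append_nil p.val))
  | cons a y ih =>
    intro p h
    rw [mem_evalFrom_cons]
    have h' : p.val.length + (y.length + 1) ≤ m := by simpa using h
    have hpa : (p.val ++ [a]).length = p.val.length + 1 := by simp
    have hlen : (p.val ++ [a]).length + y.length ≤ m := by omega
    have hpam : (p.val ++ [a]).length ≤ m := by omega
    refine ⟨(false, p), rfl, @Prod.mk Bool (ListLe α m) false ⟨p.val ++ [a], hpam⟩, ?_, ?_⟩
    · rw [step_false]
      exact Set.mem_setOf.mpr (Or.inl ⟨rfl, rfl⟩)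
    · have := ih ⟨p.val ++ [a], hpam⟩ hlen
      convert this using 3
      simp

lemma blockNFA_accepts (L : Language α) (ℓ : ℕ) (hℓ : 0 < ℓ)
    (hL : ∀ w ∈ L, w.length = ℓ) :
    (blockNFA L ((ℓ + 1) / 2)).accepts = L := by
  set m := (ℓ + 1) / 2 with hm
  ext x
  rw [NFA.mem_accepts]
  constructor
  · rintro ⟨q, hq, hqe⟩
    rw [accept_eq, Set.mem_singleton_iff] at hq
    rw [start_eq] at hqe
    subst hq
    have := lemF L m x (nilSt α m) (nilSt α m) hqe
    obtain ⟨y, a, z, u, hx, hmem, hu⟩ := this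
    have : x = y ++ a :: u.val := by rw [hx, hu]; simp [nilSt]
    rw [this]
    simpa [nilSt] using hmem
  · intro hx
    have hxl : x.length = ℓ := hL x hx
    set j := min m (ℓ - 1) with hj
    have hjx : j < x.length := by rw [hxl]; omega
    have hrest : x.drop j ≠ [] := by
      intro hcon
      have := congrArg List.length hcon
      simp [hxl] at this
      omega
    obtain ⟨a, u, hau⟩ : ∃ a u, x.drop j = a :: u := by
      cases hdrop : x.drop j with
      | nil => exact absurd hdrop hrest
      | cons a u => exact ⟨a, u, rfl⟩
    have hsplit : x = x.take j ++ a :: u := by rw [← hau]; simp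
    have hm2 : ℓ ≤ 2 * m + 1 := by omega
    have hptake : (x.take j).length ≤ m := by
      simp [hxl]; omega
    have hulen : u.length ≤ m := by
      have := congrArg List.length hsplit
      simp [hxl] at this
      omega
    refine ⟨(true, nilSt α m), by rw [accept_eq]; rfl, ?_⟩
    rw [start_eq]
    rw [hsplit, evalFrom_append, mem_evalFrom_iff]
    refine ⟨@Prod.mk Bool (ListLe α m) false ⟨x.take j, hptake⟩, ?_, ?_⟩
    · have := reach_false L m (x.take j) (nilSt α m) (by simpa [nilSt] using hptake)
      exact this
    · rw [mem_evalFrom_cons]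
      refine ⟨@Prod.mk Bool (ListLe α m) false ⟨x.take j, hptake⟩, rfl, @Prod.mk Bool (ListLe α m) true ⟨u, hulen⟩, ?_, ?_⟩
      · erw [step_false]
        exact Set.mem_setOf.mpr (Or.inr ⟨rfl, by rwa [← hsplit]⟩)
      · erw [lemB]
        exact ⟨nilSt α m, rfl, by simp [nilSt]⟩

end Stmt7Aux

theorem stmt7 (k ℓ : ℕ) (hk : 2 ≤ k) (hℓ : 0 < ℓ)
    {α : Type} [Fintype α] (hcard : Fintype.card α = k) :
    (∀ L : Language α, (∀ w ∈ L, w.length = ℓ) →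
      nsc L ≤ 2 * ((k ^ ((ℓ + 1) / 2 + 1) - 1) / (k - 1))) ∧
    (ℓ % 2 = 0 → ∀ (σ : Type) [Fintype σ] (M : NFA α σ),
      M.accepts = palLang α (ℓ / 2) → k ^ (ℓ / 2) ≤ Fintype.card σ) := by
  constructor
  · intro L hLblock
    set m := (ℓ + 1) / 2 with hm
    have hacc : (Stmt7Aux.blockNFA L m).accepts = L :=
      Stmt7Aux.blockNFA_accepts L ℓ hℓ hLblock
    have h1 : nsc L ≤ Fintype.card (Bool × Stmt7Aux.ListLe α m) := by
      rw [← hacc]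
      exact Stmt7Aux.nsc_accepts_le_card (Stmt7Aux.blockNFA L m)
    have h2 : Fintype.card (Bool × Stmt7Aux.ListLe α m)
        = 2 * ((k ^ (m + 1) - 1) / (k - 1)) := by
      rw [Fintype.card_prod, Fintype.card_bool, Stmt7Aux.card_ListLe, hcard,
        Nat.geomSum_eq hk]
    rw [h2] at h1
    exact h1
  · intro _ σ _ M hM
    have := Stmt7Aux.lower_bound (ℓ / 2) M hM
    rwa [hcard] at this
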